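/- Let X be a real Hilbert space and let T : X → X be a nonexpansive map with Fix T ≠ ∅. Let (λ_n) be a sequence in [0,1] with ∑_{n∈ℕ} (1−λ_n)λ_n = +∞, let x_0 ∈ X, and define x_{n+1} := (1−λ_n)x_n + λ_n T x_n for all n. Then (x_n) converges weakly to a point of Fix T, and (x_n) is Fejér monotone with respect to Fix T, i.e., ‖x_{n+1} − f‖ ≤ ‖x_n − f‖ for every f ∈ Fix T and every n. -/

import Mathlib

open Filter Topology

open scoped RealInnerProductSpace

set_option linter.unusedSectionVars false

lemma KMaux.norm_combo_sq {X : Type*} [NormedAddCommGroup X] [InnerProductSpace ℝ X]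
    (a b : X) (t : ℝ) :
    ‖(1-t) • a + t • b‖^2 = (1-t)*‖a‖^2 + t*‖b‖^2 - t*(1-t)*‖a-b‖^2 := by
  have h : ∀ v : X, ‖v‖^2 = ⟪v, v⟫ := fun v => (real_inner_self_eq_norm_sq v).symm
  rw [h, h, h, h]
  simp only [inner_add_left, inner_add_right, inner_sub_left, inner_sub_right,
    real_inner_smul_left, real_inner_smul_right, real_inner_comm a b]
  ring

/-- Weak sequential compactness of bounded sequences in a real Hilbert space. -/
lemma KMaux.exists_weak_cluster {X : Type*} [NormedAddCommGroup X] [InnerProductSpace ℝ X]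
    [CompleteSpace X] (x : ℕ → X) (C : ℝ) (hC : ∀ n, ‖x n‖ ≤ C) :
    ∃ (z : X) (φ : ℕ → ℕ), StrictMono φ ∧
      ∀ y : X, Tendsto (fun j => ⟪x (φ j), y⟫) atTop (𝓝 ⟪z, y⟫) := by
  have hC0 : (0:ℝ) ≤ C := le_trans (norm_nonneg _) (hC 0)
  set M : Submodule ℝ X := (Submodule.span ℝ (Set.range x)).topologicalClosure with hM
  have hxM : ∀ n, x n ∈ M := fun n =>
    Submodule.le_topologicalClosure _ (Submodule.subset_span (Set.mem_range_self n))
  haveI : CompleteSpace M := (Submodule.isClosed_topologicalClosure _).completeSpace_coe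
  -- a countable dense sequence in `M`
  have hsep : TopologicalSpace.IsSeparable (M : Set X) := by
    have h1 : TopologicalSpace.IsSeparable (Set.range x) :=
      (Set.countable_range x).isSeparable
    have := h1.span (R := ℝ)
    simpa [hM, Submodule.topologicalClosure_coe] using this.closure
  obtain ⟨c, hc_count, hc_sub⟩ := hsep
  obtain ⟨y, hy⟩ := (hc_count.insert (0:X)).exists_eq_range ⟨0, Set.mem_insert _ _⟩
  have hMy : (M : Set X) ⊆ closure (Set.range y) := by
    rw [← hy]
    exact hc_sub.trans (closure_mono (Set.subset_insert _ _))
  -- a diagonal subsequence making all `⟪x n, y k⟫` converge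
  have hbdd : ∀ n k, (fun n k => ⟪x n, y k⟫) n k ∈ Set.Icc (-(C * ‖y k‖)) (C * ‖y k‖) := by
    intro n k
    have h := abs_real_inner_le_norm (x n) (y k)
    have h2 : ‖x n‖ * ‖y k‖ ≤ C * ‖y k‖ :=
      mul_le_mul_of_nonneg_right (hC n) (norm_nonneg _)
    constructor
    · nlinarith [abs_nonneg ⟪x n, y k⟫, le_abs_self ⟪x n, y k⟫, neg_abs_le ⟪x n, y k⟫]
    · nlinarith [le_abs_self ⟪x n, y k⟫]
  have hK : IsCompact (Set.univ.pi fun k => Set.Icc (-(C * ‖y k‖)) (C * ‖y k‖)) :=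
    isCompact_univ_pi fun k => isCompact_Icc
  obtain ⟨g, hg, φ, hφ, hconv⟩ :=
    hK.isSeqCompact (x := fun n k => ⟪x n, y k⟫) (fun n => by
      intro k _; exact hbdd n k)
  have hptwise : ∀ k, ∃ L, Tendsto (fun j => ⟪x (φ j), y k⟫) atTop (𝓝 L) := by
    intro k
    exact ⟨g k, by simpa using tendsto_pi_nhds.mp hconv k⟩
  -- the inner products converge against every vector
  have hCS : ∀ (n : ℕ) (v : X), |⟪x n, v⟫| ≤ C * ‖v‖ := fun n v =>
    (abs_real_inner_le_norm (x n) v).trans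
      (mul_le_mul_of_nonneg_right (hC n) (norm_nonneg _))
  have hCauchy : ∀ v : X, CauchySeq fun j => ⟪x (φ j), v⟫ := by
    intro v
    set w : X := (Submodule.orthogonalProjection M v : X) with hw
    have heq : ∀ n, ⟪x n, v⟫ = ⟪x n, w⟫ := by
      intro n
      have hperp : v - w ∈ Mᗮ := Submodule.sub_starProjection_mem_orthogonal v
      have h0 : ⟪x n, v - w⟫ = 0 := hperp (x n) (hxM n)
      rw [inner_sub_right] at h0
      linarith
    simp only [heq]
    rw [Metric.cauchySeq_iff]
    intro ε hε
    have hwcl : w ∈ closure (Set.range y) := hMy (Submodule.orthogonalProjection M v).2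
    obtain ⟨b, ⟨k, rfl⟩, hbk⟩ :=
      Metric.mem_closure_iff.mp hwcl (ε / (3 * (C + 1))) (by positivity)
    obtain ⟨L, hL⟩ := hptwise k
    obtain ⟨N, hN⟩ := Metric.cauchySeq_iff.mp hL.cauchySeq (ε / 3) (by positivity)
    refine ⟨N, fun m hm n hn => ?_⟩
    have h1 : ∀ j, |⟪x j, w⟫ - ⟪x j, y k⟫| ≤ ε / 3 := by
      intro j
      have := hCS j (w - y k)
      rw [inner_sub_right] at this
      have hwyk : ‖w - y k‖ ≤ ε / (3 * (C + 1)) := by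
        rw [dist_eq_norm] at hbk; linarith
      have h2 : C * ‖w - y k‖ ≤ C * (ε / (3 * (C + 1))) :=
        mul_le_mul_of_nonneg_left hwyk hC0
      have h3 : C * (ε / (3 * (C + 1))) ≤ ε / 3 := by
        have hd : (0:ℝ) < C + 1 := by positivity
        have he : C * (ε / (3 * (C + 1))) = (C / (C + 1)) * (ε / 3) := by
          rw [div_mul_div_comm, mul_comm (C+1) 3, mul_comm C (ε/(3*(C+1))),
            div_mul_eq_mul_div, mul_comm ε C]
        rw [he]
        have h4 : C / (C + 1) ≤ 1 := by rw [div_le_one hd]; linarith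
        nlinarith [le_of_lt hε]
      linarith
    have h2 := hN m hm n hn
    have e1 := h1 (φ m)
    have e2 := h1 (φ n)
    rw [Real.dist_eq] at h2 ⊢
    have : |⟪x (φ m), w⟫ - ⟪x (φ n), w⟫| ≤
        |⟪x (φ m), w⟫ - ⟪x (φ m), y k⟫| + |⟪x (φ m), y k⟫ - ⟪x (φ n), y k⟫| +
          |⟪x (φ n), y k⟫ - ⟪x (φ n), w⟫| := by
      calc |⟪x (φ m), w⟫ - ⟪x (φ n), w⟫|
          = |(⟪x (φ m), w⟫ - ⟪x (φ m), y k⟫) + (⟪x (φ m), y k⟫ - ⟪x (φ n), y k⟫) +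
              (⟪x (φ n), y k⟫ - ⟪x (φ n), w⟫)| := by ring_nf
        _ ≤ _ := by
            exact (abs_add_le _ _).trans (add_le_add_left (abs_add_le _ _) _)
    have e3 : |⟪x (φ n), y k⟫ - ⟪x (φ n), w⟫| = |⟪x (φ n), w⟫ - ⟪x (φ n), y k⟫| :=
      abs_sub_comm _ _
    rw [e3] at this
    linarith
  have hlim : ∀ v : X, ∃ L : ℝ, Tendsto (fun j => ⟪x (φ j), v⟫) atTop (𝓝 L) :=
    fun v => cauchySeq_tendsto_of_complete (hCauchy v)
  choose f hf using hlim
  have hadd : ∀ a b : X, f (a + b) = f a + f b := by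
    intro a b
    refine tendsto_nhds_unique (hf (a + b)) ?_
    have := (hf a).add (hf b)
    simpa [inner_add_right] using this
  have hsmul : ∀ (r : ℝ) (a : X), f (r • a) = r * f a := by
    intro r a
    refine tendsto_nhds_unique (hf (r • a)) ?_
    have := (hf a).const_mul r
    simpa [real_inner_smul_right] using this
  have hbound : ∀ v : X, ‖f v‖ ≤ C * ‖v‖ := by
    intro v
    rw [Real.norm_eq_abs]
    exact le_of_tendsto ((hf v).abs) (Eventually.of_forall fun j => hCS (φ j) v)
  let F : X →L[ℝ] ℝ := LinearMap.mkContinuous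
    { toFun := f, map_add' := hadd, map_smul' := hsmul } C hbound
  refine ⟨(InnerProductSpace.toDual ℝ X).symm F, φ, hφ, fun v => ?_⟩
  have : ⟪(InnerProductSpace.toDual ℝ X).symm F, v⟫ = F v :=
    InnerProductSpace.toDual_symm_apply
  rw [this]
  exact hf v

/-- Demiclosedness of `I - T` at `0` for a nonexpansive map. -/
lemma KMaux.demiclosed {X : Type*} [NormedAddCommGroup X] [InnerProductSpace ℝ X]
    (T : X → X) (hT : ∀ x y : X, ‖T x - T y‖ ≤ ‖x - y‖)
    (x : ℕ → X) (C : ℝ) (hC : ∀ n, ‖x n‖ ≤ C)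
    (hreg : Tendsto (fun n => ‖x n - T (x n)‖) atTop (𝓝 0))
    (ψ : ℕ → ℕ) (hψ : StrictMono ψ) (z : X)
    (hw : ∀ y : X, Tendsto (fun j => ⟪x (ψ j), y⟫) atTop (𝓝 ⟪z, y⟫)) :
    T z = z := by
  set u : X := T z - z with hu
  set e : ℕ → X := fun n => x n - T (x n) with he
  have key : ∀ n, ‖e n + u‖^2 ≤ 2 * ⟪x n - z, e n⟫ + 2 * ⟪x n - z, u⟫ := by
    intro n
    have h1 : ‖T (x n) - T z‖ ≤ ‖x n - z‖ := hT (x n) z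
    have h2 : T (x n) - T z = (x n - z) - (e n + u) := by simp [he, hu]; abel
    have h3 : ‖(x n - z) - (e n + u)‖^2 ≤ ‖x n - z‖^2 := by
      rw [← h2]; exact pow_le_pow_left₀ (norm_nonneg _) h1 2
    rw [@norm_sub_sq_real] at h3
    have h4 : ⟪x n - z, e n + u⟫ = ⟪x n - z, e n⟫ + ⟪x n - z, u⟫ := inner_add_right _ _ _
    linarith
  have hregψ : Tendsto (fun j => ‖e (ψ j)‖) atTop (𝓝 0) := hreg.comp hψ.tendsto_atTop
  have heψ : Tendsto (fun j => e (ψ j)) atTop (𝓝 0) :=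
    tendsto_zero_iff_norm_tendsto_zero.mpr hregψ
  have hr1 : Tendsto (fun j => 2 * ⟪x (ψ j) - z, e (ψ j)⟫) atTop (𝓝 0) := by
    have hb : ∀ j, ‖2 * ⟪x (ψ j) - z, e (ψ j)⟫‖ ≤ 2 * (C + ‖z‖) * ‖e (ψ j)‖ := by
      intro j
      rw [norm_mul, Real.norm_eq_abs, Real.norm_eq_abs, abs_two, mul_assoc]
      refine mul_le_mul_of_nonneg_left ?_ (by norm_num)
      refine (abs_real_inner_le_norm _ _).trans ?_
      refine mul_le_mul_of_nonneg_right ?_ (norm_nonneg _)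
      exact (norm_sub_le _ _).trans (add_le_add_left (hC _) _)
    refine squeeze_zero_norm hb ?_
    simpa using hregψ.const_mul (2 * (C + ‖z‖))
  have hr2 : Tendsto (fun j => 2 * ⟪x (ψ j) - z, u⟫) atTop (𝓝 0) := by
    have : Tendsto (fun j => ⟪x (ψ j), u⟫ - ⟪z, u⟫) atTop (𝓝 (⟪z, u⟫ - ⟪z, u⟫)) :=
      (hw u).sub_const _
    rw [sub_self] at this
    have h2 := this.const_mul 2
    rw [mul_zero] at h2
    refine h2.congr fun j => ?_
    rw [inner_sub_left]
  have hrhs : Tendsto (fun j => 2 * ⟪x (ψ j) - z, e (ψ j)⟫ + 2 * ⟪x (ψ j) - z, u⟫)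
      atTop (𝓝 0) := by simpa using hr1.add hr2
  have hlhs : Tendsto (fun j => ‖e (ψ j) + u‖^2) atTop (𝓝 (‖u‖^2)) := by
    have h1 : Tendsto (fun j => e (ψ j) + u) atTop (𝓝 (0 + u)) := heψ.add_const u
    rw [zero_add] at h1
    exact (((continuous_norm.comp continuous_id).pow 2).continuousAt.tendsto.comp h1 : _)
  have hfin : ‖u‖^2 ≤ 0 :=
    le_of_tendsto_of_tendsto' hlhs hrhs fun j => key (ψ j)
  have h5 : ‖u‖ = 0 := by nlinarith [norm_nonneg u, sq_nonneg ‖u‖]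
  have h6 : u = 0 := norm_eq_zero.mp h5
  rw [hu] at h6
  exact sub_eq_zero.mp h6

section Main
variable {X : Type*} [NormedAddCommGroup X] [InnerProductSpace ℝ X] [CompleteSpace X]
  (T : X → X) (hT : ∀ x y : X, ‖T x - T y‖ ≤ ‖x - y‖)
  (lam : ℕ → ℝ) (hlam : ∀ n, lam n ∈ Set.Icc (0 : ℝ) 1)
  (x : ℕ → X) (hx : ∀ n, x (n + 1) = (1 - lam n) • x n + lam n • T (x n))

include hT hlam hx in
lemma KMaux.sq_ineq (f : X) (hf : T f = f) (n : ℕ) :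
    ‖x (n+1) - f‖^2 ≤ ‖x n - f‖^2 - (1 - lam n) * lam n * ‖x n - T (x n)‖^2 := by
  have hrep : x (n+1) - f = (1 - lam n) • (x n - f) + lam n • (T (x n) - f) := by
    rw [hx n]; module
  have h1 := KMaux.norm_combo_sq (x n - f) (T (x n) - f) (lam n)
  rw [← hrep] at h1
  have h2 : (x n - f) - (T (x n) - f) = x n - T (x n) := by abel
  rw [h2] at h1
  have h3 : ‖T (x n) - f‖ ≤ ‖x n - f‖ := by
    have := hT (x n) f; rwa [hf] at this
  have h4 : ‖T (x n) - f‖^2 ≤ ‖x n - f‖^2 := pow_le_pow_left₀ (norm_nonneg _) h3 2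
  obtain ⟨hl0, hl1⟩ := hlam n
  nlinarith

include hT hlam hx in
lemma KMaux.fejer (f : X) (hf : T f = f) (n : ℕ) : ‖x (n+1) - f‖ ≤ ‖x n - f‖ := by
  have h1 := KMaux.sq_ineq T hT lam hlam x hx f hf n
  obtain ⟨hl0, hl1⟩ := hlam n
  have h0 : 0 ≤ (1 - lam n) * lam n * ‖x n - T (x n)‖^2 :=
    mul_nonneg (mul_nonneg (by linarith) hl0) (sq_nonneg _)
  have h2 : ‖x (n+1) - f‖^2 ≤ ‖x n - f‖^2 := by linarith
  exact (pow_le_pow_iff_left₀ (norm_nonneg _) (norm_nonneg _) two_ne_zero).mp h2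

include hT hlam hx in
lemma KMaux.residual_antitone (n : ℕ) : ‖x (n+1) - T (x (n+1))‖ ≤ ‖x n - T (x n)‖ := by
  have h1 : x (n+1) - T (x n) = (1 - lam n) • (x n - T (x n)) := by rw [hx n]; module
  have h2 : x n - x (n+1) = lam n • (x n - T (x n)) := by rw [hx n]; module
  obtain ⟨hl0, hl1⟩ := hlam n
  calc ‖x (n+1) - T (x (n+1))‖
      ≤ ‖x (n+1) - T (x n)‖ + ‖T (x n) - T (x (n+1))‖ := norm_sub_le_norm_sub_add_norm_sub _ _ _
    _ ≤ (1 - lam n) * ‖x n - T (x n)‖ + ‖x n - x (n+1)‖ := by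
        refine add_le_add ?_ (hT _ _)
        rw [h1, norm_smul, Real.norm_eq_abs, abs_of_nonneg (by linarith)]
    _ ≤ (1 - lam n) * ‖x n - T (x n)‖ + lam n * ‖x n - T (x n)‖ := by
        rw [h2, norm_smul, Real.norm_eq_abs, abs_of_nonneg hl0]
    _ = ‖x n - T (x n)‖ := by ring

include hT hlam hx in
lemma KMaux.norm_lim (f : X) (hf : T f = f) :
    ∃ L : ℝ, Tendsto (fun n => ‖x n - f‖) atTop (𝓝 L) := by
  have hanti : Antitone fun n => ‖x n - f‖ :=
    antitone_nat_of_succ_le (fun n => KMaux.fejer T hT lam hlam x hx f hf n)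
  refine ⟨_, tendsto_atTop_ciInf hanti ⟨0, ?_⟩⟩
  rintro r ⟨n, rfl⟩
  exact norm_nonneg _

include hT hlam hx in
lemma KMaux.unique_weak (p q : X) (hp : T p = p) (hq : T q = q)
    (κ₁ κ₂ : ℕ → ℕ) (h₁ : StrictMono κ₁) (h₂ : StrictMono κ₂)
    (hwp : ∀ y : X, Tendsto (fun j => ⟪x (κ₁ j), y⟫) atTop (𝓝 ⟪p, y⟫))
    (hwq : ∀ y : X, Tendsto (fun j => ⟪x (κ₂ j), y⟫) atTop (𝓝 ⟪q, y⟫)) : p = q := by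
  obtain ⟨Lp, hLp⟩ := KMaux.norm_lim T hT lam hlam x hx p hp
  obtain ⟨Lq, hLq⟩ := KMaux.norm_lim T hT lam hlam x hx q hq
  have hinner : Tendsto (fun n => ⟪x n, p - q⟫) atTop
      (𝓝 ((Lq^2 - Lp^2 + ‖p‖^2 - ‖q‖^2)/2)) := by
    have hEq : ∀ n, ⟪x n, p - q⟫ = (‖x n - q‖^2 - ‖x n - p‖^2 + ‖p‖^2 - ‖q‖^2)/2 := by
      intro n
      have e1 : ‖x n - q‖^2 = ‖x n‖^2 - 2*⟪x n, q⟫ + ‖q‖^2 := norm_sub_sq_real (x n) q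
      have e2 : ‖x n - p‖^2 = ‖x n‖^2 - 2*⟪x n, p⟫ + ‖p‖^2 := norm_sub_sq_real (x n) p
      rw [inner_sub_right]
      linarith
    have hR : Tendsto (fun n => (‖x n - q‖^2 - ‖x n - p‖^2 + ‖p‖^2 - ‖q‖^2)/2) atTop
        (𝓝 ((Lq^2 - Lp^2 + ‖p‖^2 - ‖q‖^2)/2)) :=
      ((((hLq.pow 2).sub (hLp.pow 2)).add_const (‖p‖^2)).sub_const (‖q‖^2)).div_const 2
    exact hR.congr fun n => (hEq n).symm
  have hvp : ⟪p, p - q⟫ = (Lq^2 - Lp^2 + ‖p‖^2 - ‖q‖^2)/2 :=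
    tendsto_nhds_unique (hwp (p - q)) (hinner.comp h₁.tendsto_atTop)
  have hvq : ⟪q, p - q⟫ = (Lq^2 - Lp^2 + ‖p‖^2 - ‖q‖^2)/2 :=
    tendsto_nhds_unique (hwq (p - q)) (hinner.comp h₂.tendsto_atTop)
  have h0 : ⟪p - q, p - q⟫ = (0:ℝ) := by
    rw [inner_sub_left]; linarith
  have h6 : p - q = 0 := inner_self_eq_zero.mp h0
  exact sub_eq_zero.mp h6
end Main

/-- **Reich's theorem.** If `T` is a nonexpansive self-map of a real Hilbert space with a
fixed point, `(λₙ)` lies in `[0,1]` with `∑ (1-λₙ)λₙ = +∞`, and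
`xₙ₊₁ = (1-λₙ)xₙ + λₙ T xₙ`, then `(xₙ)` converges weakly to a fixed point of `T`,
and `(xₙ)` is Fejér monotone with respect to `Fix T`. -/
theorem km_weak_convergence_and_fejer
    {X : Type*} [NormedAddCommGroup X] [InnerProductSpace ℝ X] [CompleteSpace X]
    (T : X → X) (hT : ∀ x y : X, ‖T x - T y‖ ≤ ‖x - y‖)
    (hF : (Function.fixedPoints T).Nonempty)
    (lam : ℕ → ℝ) (hlam : ∀ n, lam n ∈ Set.Icc (0 : ℝ) 1)
    (hdiv : ¬ Summable (fun n => (1 - lam n) * lam n))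
    (x : ℕ → X) (hx : ∀ n, x (n + 1) = (1 - lam n) • x n + lam n • T (x n)) :
    (∃ p ∈ Function.fixedPoints T,
        ∀ y : X, Tendsto (fun n => ⟪x n, y⟫) atTop (𝓝 ⟪p, y⟫)) ∧
      (∀ f ∈ Function.fixedPoints T, ∀ n : ℕ, ‖x (n + 1) - f‖ ≤ ‖x n - f‖) := by
  obtain ⟨f0, hf0'⟩ := hF
  have hf0 : T f0 = f0 := hf0'
  refine ⟨?_, fun f hf n => KMaux.fejer T hT lam hlam x hx f hf n⟩
  -- boundedness
  have hanti0 : Antitone fun n => ‖x n - f0‖ :=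
    antitone_nat_of_succ_le (fun n => KMaux.fejer T hT lam hlam x hx f0 hf0 n)
  set C := ‖x 0 - f0‖ + ‖f0‖ with hCdef
  have hxb : ∀ n, ‖x n‖ ≤ C := by
    intro n
    have h1 : ‖x n - f0‖ ≤ ‖x 0 - f0‖ := hanti0 (Nat.zero_le n)
    have h2 : ‖x n‖ ≤ ‖x n - f0‖ + ‖f0‖ := by
      have := norm_add_le (x n - f0) f0
      simpa using this
    linarith
  -- summability of the residual terms
  set t : ℕ → ℝ := fun n => (1 - lam n) * lam n * ‖x n - T (x n)‖^2 with ht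
  have htn : ∀ n, 0 ≤ t n := by
    intro n; obtain ⟨hl0, hl1⟩ := hlam n
    exact mul_nonneg (mul_nonneg (by linarith) hl0) (sq_nonneg _)
  have hpart : ∀ n, ∑ k ∈ Finset.range n, t k ≤ ‖x 0 - f0‖^2 := by
    intro n
    have key : ∑ k ∈ Finset.range n, t k ≤ ‖x 0 - f0‖^2 - ‖x n - f0‖^2 := by
      induction n with
      | zero => simp
      | succ m ih =>
        rw [Finset.sum_range_succ]
        have := KMaux.sq_ineq T hT lam hlam x hx f0 hf0 m
        have ht' : t m = (1 - lam m) * lam m * ‖x m - T (x m)‖^2 := rfl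
        linarith
    nlinarith [sq_nonneg ‖x n - f0‖]
  have hsum : Summable t := summable_of_sum_range_le htn hpart
  -- residual is antitone and tends to `0`
  have hcanti : Antitone fun n => ‖x n - T (x n)‖ :=
    antitone_nat_of_succ_le (fun n => KMaux.residual_antitone T hT lam hlam x hx n)
  have hbdd : BddBelow (Set.range fun n => ‖x n - T (x n)‖) := by
    refine ⟨0, ?_⟩; rintro r ⟨n, rfl⟩; exact norm_nonneg _
  set L := ⨅ n, ‖x n - T (x n)‖ with hLdef
  have hcL : Tendsto (fun n => ‖x n - T (x n)‖) atTop (𝓝 L) :=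
    tendsto_atTop_ciInf hcanti hbdd
  have hL0 : 0 ≤ L := le_ciInf fun n => norm_nonneg _
  have hLz : L = 0 := by
    by_contra hne
    have hLpos : 0 < L := lt_of_le_of_ne hL0 (Ne.symm hne)
    apply hdiv
    have hle : ∀ n, (1 - lam n) * lam n ≤ t n / L^2 := by
      intro n
      obtain ⟨hl0, hl1⟩ := hlam n
      have h1 : L ≤ ‖x n - T (x n)‖ := ciInf_le hbdd n
      have h2 : L^2 ≤ ‖x n - T (x n)‖^2 := pow_le_pow_left₀ hL0 h1 2
      rw [le_div_iff₀ (by positivity)]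
      have h3 : (1 - lam n) * lam n * L^2 ≤ (1 - lam n) * lam n * ‖x n - T (x n)‖^2 :=
        mul_le_mul_of_nonneg_left h2 (mul_nonneg (by linarith) hl0)
      simpa [ht] using h3
    refine Summable.of_nonneg_of_le ?_ hle (hsum.div_const _)
    intro n
    obtain ⟨hl0, hl1⟩ := hlam n
    exact mul_nonneg (by linarith) hl0
  rw [hLz] at hcL
  -- a weak cluster point, which is a fixed point
  obtain ⟨z, φ, hφ, hwz⟩ := KMaux.exists_weak_cluster x C hxb
  have hz : T z = z := KMaux.demiclosed T hT x C hxb hcL φ hφ z hwz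
  refine ⟨z, hz, ?_⟩
  intro y
  by_contra hcon
  rw [Metric.tendsto_atTop] at hcon
  push_neg at hcon
  obtain ⟨ε, hε, hfreq⟩ := hcon
  have hfreq' : ∀ N, ∃ n > N, ε ≤ dist (⟪x n, y⟫) (⟪z, y⟫) := by
    intro N
    obtain ⟨n, hn, h⟩ := hfreq (N + 1)
    exact ⟨n, by omega, h⟩
  obtain ⟨ψ, hψ, hψd⟩ := Nat.exists_strictMono_subsequence hfreq'
  obtain ⟨z₂, φ₂, hφ₂, hwz₂⟩ :=
    KMaux.exists_weak_cluster (fun j => x (ψ j)) C (fun j => hxb _)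
  have hcomp : StrictMono (ψ ∘ φ₂) := hψ.comp hφ₂
  have hwz₂' : ∀ v : X, Tendsto (fun j => ⟪x ((ψ ∘ φ₂) j), v⟫) atTop (𝓝 ⟪z₂, v⟫) :=
    fun v => hwz₂ v
  have hz₂ : T z₂ = z₂ := KMaux.demiclosed T hT x C hxb hcL (ψ ∘ φ₂) hcomp z₂ hwz₂'
  have heqz : z = z₂ :=
    KMaux.unique_weak T hT lam hlam x hx z z₂ hz hz₂ φ (ψ ∘ φ₂) hφ hcomp hwz hwz₂'
  have htend : Tendsto (fun j => ⟪x ((ψ ∘ φ₂) j), y⟫) atTop (𝓝 ⟪z, y⟫) := by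
    rw [heqz]; exact hwz₂' y
  obtain ⟨N, hN⟩ := Metric.tendsto_atTop.mp htend ε hε
  exact absurd (hN N le_rfl) (not_lt.mpr (hψd (φ₂ N)))
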